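/- Let S = {X_α, p^β_α, α < β < τ} be an almost continuous inverse system with skeletal bonding maps, X = a-lim S, and U, V ⊆ X open with finite ranks q(U), q(V) and cl(U) ∩ cl(V) = ∅. If q(U) ∩ q(V) ∩ [γ, τ) = ∅ for some γ < τ, then Int cl(p_γ(U)) ∩ Int cl(p_γ(V)) = ∅. -/

import Mathlib

open Topology Order

universe u

/-- An inverse system of topological spaces indexed by the ordinals below `τ`,
with continuous surjective bonding maps. -/
structure InvSystem (τ : Ordinal.{u}) where
  X : Ordinal.{u} → Type u
  topo : ∀ α, TopologicalSpace (X α)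
  p : ∀ α β, α ≤ β → X β → X α
  p_cont : ∀ α β (h : α ≤ β), Continuous (p α β h)
  p_surj : ∀ α β (h : α ≤ β), β < τ → Function.Surjective (p α β h)
  p_id : ∀ α (x : X α), p α α le_rfl x = x
  p_comp : ∀ α β γ (h₁ : α ≤ β) (h₂ : β ≤ γ) (x : X γ),
    p α β h₁ (p β γ h₂ x) = p α γ (h₁.trans h₂) x

attribute [instance] InvSystem.topo

namespace InvSystem

variable {τ : Ordinal.{u}} (S : InvSystem τ)

/-- The inverse limit of the subsystem indexed by the ordinals below `γ`. -/
def lim (γ : Ordinal.{u}) : Set (∀ α : {o : Ordinal.{u} // o < γ}, S.X α.1) :=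
  {f | ∀ (a b : {o : Ordinal.{u} // o < γ}) (h : a.1 ≤ b.1), S.p a.1 b.1 h (f b) = f a}

/-- The canonical map from `X γ` to the inverse limit of the subsystem below `γ`. -/
def diag (γ : Ordinal.{u}) (x : S.X γ) : ↥(S.lim γ) :=
  ⟨fun a => S.p a.1 γ a.2.le x, fun a b h => S.p_comp a.1 b.1 γ h b.2.le x⟩

/-- The system is almost continuous: for every limit ordinal `γ < τ`, `X γ` embeds
densely into the inverse limit of the subsystem below `γ`, compatibly with the
projections. -/
def AlmostContinuous : Prop :=
  ∀ γ : Ordinal.{u}, γ < τ → Order.IsSuccLimit γ →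
    Topology.IsEmbedding (S.diag γ) ∧ DenseRange (S.diag γ)

variable (A : Set (∀ α : {o : Ordinal.{u} // o < τ}, S.X α.1))

/-- The `α`-th limit projection restricted to `A`. -/
def proj (α : Ordinal.{u}) (h : α < τ) : ↥A → S.X α :=
  fun x => x.1 ⟨α, h⟩

/-- `A` is the almost limit of `S`: it is a subspace of the inverse limit whose
projections are onto the `X α`. -/
def IsALim : Prop :=
  A ⊆ S.lim τ ∧ ∀ (α : Ordinal.{u}) (h : α < τ), Function.Surjective (S.proj A α h)

/-- The rank of a subset `U` of the almost limit `A`. -/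
def rank (U : Set ↥A) : Set Ordinal.{u} :=
  {α | ∃ h : succ α < τ,
    (interior ((S.p α (succ α) (le_succ α) ⁻¹'
        closure (S.proj A α ((lt_succ α).trans h) '' U)) \
      closure (S.proj A (succ α) h '' U))).Nonempty}

end InvSystem

/-- A continuous map is skeletal if the interior of the closure of the image of
every nonempty open set is nonempty. -/
def IsSkeletalMap {X Y : Type*} [TopologicalSpace X] [TopologicalSpace Y] (f : X → Y) : Prop :=
  Continuous f ∧
  ∀ U : Set X, IsOpen U → U.Nonempty → (interior (closure (f '' U))).Nonempty

/-- A continuous map is nearly open if `f(U) ⊆ Int cl f(U)` for every open `U`. -/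
def IsNearlyOpenMap {X Y : Type*} [TopologicalSpace X] [TopologicalSpace Y] (f : X → Y) : Prop :=
  ∀ U : Set X, IsOpen U → f '' U ⊆ interior (closure (f '' U))



namespace InvSystem

variable {τ : Ordinal.{u}} {S : InvSystem τ}
  {A : Set (∀ α : {o : Ordinal.{u} // o < τ}, S.X α.1)}

theorem proj_continuous (α : Ordinal.{u}) (h : α < τ) : Continuous (S.proj A α h) :=
  (continuous_apply (⟨α, h⟩ : {o : Ordinal.{u} // o < τ})).comp continuous_subtype_val

theorem proj_comp (hA : A ⊆ S.lim τ) {α β : Ordinal.{u}} (hab : α ≤ β) (hb : β < τ)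
    (x : ↥A) :
    S.p α β hab (S.proj A β hb x) = S.proj A α (lt_of_le_of_lt hab hb) x :=
  hA x.2 ⟨α, lt_of_le_of_lt hab hb⟩ ⟨β, hb⟩ hab

/-- Step lemma: if `β ∉ q(V)` then the preimage of `Int cl p_β V` is inside
`Int cl p_{β+1} V`. -/
theorem not_rank_step {V : Set ↥A} {β : Ordinal.{u}} (hsucc : succ β < τ)
    (hβ : β ∉ S.rank A V) :
    (S.p β (succ β) (le_succ β)) ⁻¹'
        (interior (closure (S.proj A β ((lt_succ β).trans hsucc) '' V)))
      ⊆ interior (closure (S.proj A (succ β) hsucc '' V)) := by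
  have hint : interior ((S.p β (succ β) (le_succ β) ⁻¹'
        closure (S.proj A β ((lt_succ β).trans hsucc) '' V)) \
      closure (S.proj A (succ β) hsucc '' V)) = ∅ := by
    by_contra h
    exact hβ ⟨hsucc, Set.nonempty_iff_ne_empty.2 h⟩
  have hGopen : IsOpen ((S.p β (succ β) (le_succ β)) ⁻¹'
      (interior (closure (S.proj A β ((lt_succ β).trans hsucc) '' V)))) :=
    isOpen_interior.preimage (S.p_cont _ _ _)
  refine interior_maximal ?_ hGopen
  intro z hz
  by_contra hzc
  have hsub : ((S.p β (succ β) (le_succ β)) ⁻¹'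
        (interior (closure (S.proj A β ((lt_succ β).trans hsucc) '' V)))) \
      closure (S.proj A (succ β) hsucc '' V) ⊆
      interior ((S.p β (succ β) (le_succ β) ⁻¹'
        closure (S.proj A β ((lt_succ β).trans hsucc) '' V)) \
      closure (S.proj A (succ β) hsucc '' V)) := by
    refine interior_maximal ?_ (hGopen.sdiff isClosed_closure)
    exact Set.diff_subset_diff_left (Set.preimage_mono interior_subset)
  have := hsub ⟨hz, hzc⟩
  rw [hint] at this
  exact this

/-- Any open neighborhood in `↥A` contains a single-coordinate basic neighborhood,
with the coordinate at least `β₀`. -/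
theorem exists_basic_nbhd (hA : S.IsALim A) {O : Set ↥A} (hO : IsOpen O) {x : ↥A}
    (hx : x ∈ O) {β₀ : Ordinal.{u}} (hβ₀ : β₀ < τ) :
    ∃ (δ : Ordinal.{u}) (hδ : δ < τ), β₀ ≤ δ ∧ ∃ O' : Set (S.X δ), IsOpen O' ∧
      S.proj A δ hδ x ∈ O' ∧ ∀ y : ↥A, S.proj A δ hδ y ∈ O' → y ∈ O := by
  obtain ⟨t, ht, hts⟩ := isOpen_induced_iff.1 hO
  have hxt : x.1 ∈ t := by rw [← hts] at hx; exact hx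
  obtain ⟨I, u, hu, hsub⟩ := isOpen_pi_iff.1 ht x.1 hxt
  set δ : Ordinal.{u} := β₀ ⊔ I.sup (fun a => a.1) with hδdef
  have hδτ : δ < τ := by
    refine sup_lt_iff.2 ⟨hβ₀, ?_⟩
    refine Finset.sup_lt_iff (lt_of_le_of_lt bot_le hβ₀) |>.2 (fun a _ => a.2)
  have hle : ∀ a : {a : {o : Ordinal.{u} // o < τ} // a ∈ I}, a.1.1 ≤ δ :=
    fun a => le_trans (Finset.le_sup a.2) le_sup_right
  refine ⟨δ, hδτ, le_sup_left,
    ⋂ a : {a : {o : Ordinal.{u} // o < τ} // a ∈ I}, S.p a.1.1 δ (hle a) ⁻¹' u a.1,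
    ?_, ?_, ?_⟩
  · exact isOpen_iInter_of_finite fun a =>
      ((hu a.1 a.2).1).preimage (S.p_cont _ _ _)
  · refine Set.mem_iInter.2 fun a => ?_
    have := proj_comp (S := S) hA.1 (hle a) hδτ x
    simp only [Set.mem_preimage]
    rw [this]
    exact (hu a.1 a.2).2
  · intro y hy
    have hyt : y.1 ∈ t := by
      refine hsub ?_
      refine Set.mem_pi.2 fun a ha => ?_
      have hmem := Set.mem_iInter.1 hy ⟨a, ha⟩
      rw [Set.mem_preimage, proj_comp (S := S) hA.1 (hle ⟨a, ha⟩) hδτ y] at hmem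
      exact hmem
    rw [← hts]
    exact hyt

/-- Single-coordinate basic neighborhoods in `X β` for a limit `β`, via almost
continuity. -/
theorem exists_basic_nbhd_limit (hac : S.AlmostContinuous) {β : Ordinal.{u}}
    (hβτ : β < τ) (hlim : Order.IsSuccLimit β) {O : Set (S.X β)} (hO : IsOpen O)
    {y : S.X β} (hy : y ∈ O) {α₀ : Ordinal.{u}} (hα₀ : α₀ < β) :
    ∃ (α' : Ordinal.{u}) (h1 : α₀ ≤ α') (h2 : α' < β), ∃ O' : Set (S.X α'),
      IsOpen O' ∧ S.p α' β h2.le y ∈ O' ∧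
      ∀ z : S.X β, S.p α' β h2.le z ∈ O' → z ∈ O := by
  obtain ⟨O₂, hO₂, hO₂s⟩ := ((hac β hβτ hlim).1.toIsInducing.isOpen_iff).1 hO
  obtain ⟨t, ht, hts⟩ := isOpen_induced_iff.1 hO₂
  have hyt : (S.diag β y).1 ∈ t := by
    have : S.diag β y ∈ O₂ := by rw [← hO₂s] at hy; exact hy
    rw [← hts] at this; exact this
  obtain ⟨I, u, hu, hsub⟩ := isOpen_pi_iff.1 ht (S.diag β y).1 hyt
  set α' : Ordinal.{u} := α₀ ⊔ I.sup (fun a => a.1) with hα'def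
  have hα'β : α' < β := by
    refine sup_lt_iff.2 ⟨hα₀, ?_⟩
    refine Finset.sup_lt_iff (lt_of_le_of_lt bot_le hα₀) |>.2 (fun a _ => a.2)
  have hle : ∀ a : {a : {o : Ordinal.{u} // o < β} // a ∈ I}, a.1.1 ≤ α' :=
    fun a => le_trans (Finset.le_sup a.2) le_sup_right
  refine ⟨α', le_sup_left, hα'β,
    ⋂ a : {a : {o : Ordinal.{u} // o < β} // a ∈ I}, S.p a.1.1 α' (hle a) ⁻¹' u a.1,
    ?_, ?_, ?_⟩
  · exact isOpen_iInter_of_finite fun a =>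
      ((hu a.1 a.2).1).preimage (S.p_cont _ _ _)
  · refine Set.mem_iInter.2 fun a => ?_
    simp only [Set.mem_preimage]
    rw [S.p_comp a.1.1 α' β (hle a) hα'β.le y]
    exact (hu a.1 a.2).2
  · intro z hz
    have hzt : (S.diag β z).1 ∈ t := by
      refine hsub ?_
      refine Set.mem_pi.2 fun a ha => ?_
      have hmem := Set.mem_iInter.1 hz ⟨a, ha⟩
      rw [Set.mem_preimage, S.p_comp a.1 α' β (hle ⟨a, ha⟩) hα'β.le z] at hmem
      exact hmem
    have : S.diag β z ∈ O₂ := by rw [← hts]; exact hzt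
    rw [← hO₂s]
    exact this

/-- Master lemma: over a rank-free interval `[α₀, β]`, the preimage of
`Int cl p_{α₀} U` under the bonding map is inside `Int cl p_β U`. -/
theorem master (hac : S.AlmostContinuous) (hA : S.IsALim A) (U : Set ↥A)
    (α₀ : Ordinal.{u}) :
    ∀ β (hβ : β < τ) (hab : α₀ ≤ β),
      (∀ σ, α₀ ≤ σ → σ < β → σ ∉ S.rank A U) →
      (S.p α₀ β hab) ⁻¹'
          (interior (closure (S.proj A α₀ (lt_of_le_of_lt hab hβ) '' U)))
        ⊆ interior (closure (S.proj A β hβ '' U)) := by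
  intro β
  induction β using Ordinal.induction with
  | h β IH =>
    intro hβ hab hfree
    rcases eq_or_lt_of_le hab with rfl | hlt
    · intro z hz
      rw [Set.mem_preimage, S.p_id α₀ z] at hz
      exact hz
    rcases Ordinal.zero_or_succ_or_isSuccLimit β with rfl | ⟨σ, rfl⟩ | hlim
    · exact absurd hlt (not_lt_of_ge (zero_le (a := α₀)))
    · -- successor case
      have hσβ : σ < succ σ := lt_succ σ
      have hσ : σ < τ := hσβ.trans hβ
      have haσ : α₀ ≤ σ := lt_succ_iff.1 hlt
      intro z hz
      refine not_rank_step (A := A) hβ (hfree σ haσ hσβ) ?_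
      rw [Set.mem_preimage]
      refine IH σ hσβ hσ haσ (fun σ' h1 h2 => hfree σ' h1 (h2.trans hσβ)) ?_
      rw [Set.mem_preimage, S.p_comp α₀ σ (succ σ) haσ (le_succ σ) z]
      exact hz
    · -- limit case
      have hGopen : IsOpen ((S.p α₀ β hab) ⁻¹'
          (interior (closure (S.proj A α₀ (lt_of_le_of_lt hab hβ) '' U)))) :=
        isOpen_interior.preimage (S.p_cont _ _ _)
      refine interior_maximal ?_ hGopen
      intro y hy
      rw [mem_closure_iff]
      intro O hO hyO
      obtain ⟨α', h1, h2, O', hO', hyO', hOsub⟩ :=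
        exists_basic_nbhd_limit hac hβ hlim hO hyO hlt
      have hα'τ : α' < τ := h2.trans hβ
      set O'' := O' ∩ (S.p α₀ α' h1) ⁻¹'
        (interior (closure (S.proj A α₀ (lt_of_le_of_lt hab hβ) '' U))) with hO''def
      have hyO'' : S.p α' β h2.le y ∈ O'' := by
        refine ⟨hyO', ?_⟩
        rw [Set.mem_preimage, S.p_comp α₀ α' β h1 h2.le y]
        exact hy
      have hO''open : IsOpen O'' :=
        hO'.inter (isOpen_interior.preimage (S.p_cont _ _ _))
      have hO''sub : O'' ⊆ interior (closure (S.proj A α' hα'τ '' U)) := by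
        intro w hw
        exact IH α' h2 hα'τ h1 (fun σ' hs1 hs2 => hfree σ' hs1 (hs2.trans h2)) hw.2
      have hclos : S.p α' β h2.le y ∈ closure (S.proj A α' hα'τ '' U) :=
        interior_subset (hO''sub hyO'')
      obtain ⟨w, hwO'', hwU⟩ := (mem_closure_iff.1 hclos) O'' hO''open hyO''
      obtain ⟨x, hxU, rfl⟩ := hwU
      refine ⟨S.proj A β hβ x, ?_, ⟨x, hxU, rfl⟩⟩
      refine hOsub _ ?_
      rw [proj_comp (S := S) hA.1 h2.le hβ x]
      exact hwO''.1

/-- Successor step across a possibly bad level `β` for `U` (but good for `V`). -/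
theorem succ_step (hskel : ∀ (α β : Ordinal.{u}) (h : α ≤ β), β < τ →
      IsSkeletalMap (S.p α β h))
    (hA : S.IsALim A) {U V : Set ↥A} (hU : IsOpen U)
    {β : Ordinal.{u}} (hsucc : succ β < τ) (hβV : β ∉ S.rank A V)
    (hW : (interior (closure (S.proj A β ((lt_succ β).trans hsucc) '' U)) ∩
           interior (closure (S.proj A β ((lt_succ β).trans hsucc) '' V))).Nonempty) :
    (interior (closure (S.proj A (succ β) hsucc '' U)) ∩
     interior (closure (S.proj A (succ β) hsucc '' V))).Nonempty := by
  have hβτ : β < τ := (lt_succ β).trans hsucc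
  set W := interior (closure (S.proj A β hβτ '' U)) ∩
      interior (closure (S.proj A β hβτ '' V)) with hWdef
  have hWopen : IsOpen W := isOpen_interior.inter isOpen_interior
  obtain ⟨w0, hw0⟩ := hW
  have hw0cl : w0 ∈ closure (S.proj A β hβτ '' U) := interior_subset hw0.1
  obtain ⟨w, hwW, hwU⟩ := (mem_closure_iff.1 hw0cl) W hWopen hw0
  obtain ⟨u, huU, hwu⟩ := hwU
  set U₁ := U ∩ (S.proj A β hβτ) ⁻¹' W with hU₁def
  have hU₁open : IsOpen U₁ := hU.inter (hWopen.preimage (proj_continuous β hβτ))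
  have huU₁ : u ∈ U₁ := ⟨huU, by rw [Set.mem_preimage, hwu]; exact hwW⟩
  obtain ⟨δ, hδ, hleδ, O', hO', hmemO', hback⟩ :=
    exists_basic_nbhd hA hU₁open huU₁ hsucc
  -- every point of O' comes from a point of U₁
  have hfromA : ∀ w' ∈ O', ∃ x : ↥A, x ∈ U₁ ∧ S.proj A δ hδ x = w' := by
    intro w' hw'
    obtain ⟨x, hx⟩ := hA.2 δ hδ w'
    exact ⟨x, hback x (by rw [hx]; exact hw'), hx⟩
  set s := S.p (succ β) δ hleδ '' O' with hsdef
  have claim1 : s ⊆ S.proj A (succ β) hsucc '' U := by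
    rintro _ ⟨w', hw', rfl⟩
    obtain ⟨x, hxU₁, hxw⟩ := hfromA w' hw'
    refine ⟨x, hxU₁.1, ?_⟩
    rw [← hxw, proj_comp (S := S) hA.1 hleδ hδ x]
  have claim2 : s ⊆ (S.p β (succ β) (le_succ β)) ⁻¹' W := by
    rintro _ ⟨w', hw', rfl⟩
    obtain ⟨x, hxU₁, hxw⟩ := hfromA w' hw'
    rw [Set.mem_preimage, S.p_comp β (succ β) δ (le_succ β) hleδ w', ← hxw,
      proj_comp (S := S) hA.1 ((le_succ β).trans hleδ) hδ x]
    exact hxU₁.2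
  have hNne : (interior (closure s)).Nonempty :=
    (hskel (succ β) δ hleδ hδ).2 O' hO' ⟨S.proj A δ hδ u, hmemO'⟩
  obtain ⟨t, htN⟩ := hNne
  have htpre : t ∈ closure ((S.p β (succ β) (le_succ β)) ⁻¹' W) :=
    closure_mono claim2 (interior_subset htN)
  obtain ⟨t', htN', htpre'⟩ :=
    (mem_closure_iff.1 htpre) (interior (closure s)) isOpen_interior htN
  refine ⟨t', ?_, ?_⟩
  · exact interior_mono (closure_mono claim1) htN'
  · refine not_rank_step (A := A) hsucc hβV ?_
    exact Set.preimage_mono Set.inter_subset_right htpre'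
/-- Climbing lemma: nonemptiness of `Int cl p_β U ∩ Int cl p_β V` propagates
upwards from `γ`, using that no level `≥ γ` is in both ranks. -/
theorem climb (hac : S.AlmostContinuous)
    (hskel : ∀ (α β : Ordinal.{u}) (h : α ≤ β), β < τ → IsSkeletalMap (S.p α β h))
    (hA : S.IsALim A) {U V : Set ↥A} (hU : IsOpen U) (hV : IsOpen V)
    (hqU : (S.rank A U).Finite) (hqV : (S.rank A V).Finite)
    {γ : Ordinal.{u}} (hγ : γ < τ)
    (hrank : ∀ β : Ordinal.{u}, γ ≤ β → ¬(β ∈ S.rank A U ∧ β ∈ S.rank A V))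
    (hW : (interior (closure (S.proj A γ hγ '' U)) ∩
           interior (closure (S.proj A γ hγ '' V))).Nonempty) :
    ∀ β (hβ : β < τ), γ ≤ β →
      (interior (closure (S.proj A β hβ '' U)) ∩
       interior (closure (S.proj A β hβ '' V))).Nonempty := by
  intro β
  induction β using Ordinal.induction with
  | h β IH =>
    intro hβ hγβ
    rcases eq_or_lt_of_le hγβ with rfl | hlt
    · exact hW
    rcases Ordinal.zero_or_succ_or_isSuccLimit β with rfl | ⟨σ, rfl⟩ | hlim
    · exact absurd hlt (not_lt_of_ge (zero_le (a := γ)))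
    · -- successor case
      have hσβ : σ < succ σ := lt_succ σ
      have hσ : σ < τ := hσβ.trans hβ
      have hγσ : γ ≤ σ := lt_succ_iff.1 hlt
      have hprev := IH σ hσβ hσ hγσ
      rcases not_and_or.1 (hrank σ hγσ) with hnU | hnV
      · have := succ_step (U := V) (V := U) hskel hA hV hβ hnU
          (by rwa [Set.inter_comm] at hprev)
        rwa [Set.inter_comm] at this
      · exact succ_step hskel hA hU hβ hnV hprev
    · -- limit case
      set F := ((hqU.union hqV).toFinset.filter (· < β)) with hF
      set αs : Ordinal.{u} := γ ⊔ F.sup succ with hαs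
      have hαsβ : αs < β := by
        refine sup_lt_iff.2 ⟨hlt, ?_⟩
        refine Finset.sup_lt_iff hlim.pos |>.2
          (fun σ hσ => hlim.succ_lt (Finset.mem_filter.1 hσ).2)
      have hαsτ : αs < τ := hαsβ.trans hβ
      have hγαs : γ ≤ αs := le_sup_left
      have hfreeU : ∀ σ, αs ≤ σ → σ < β → σ ∉ S.rank A U := by
        intro σ h1 h2 hmem
        have hmemF : σ ∈ F := Finset.mem_filter.2
          ⟨(Set.Finite.mem_toFinset _).2 (Or.inl hmem), h2⟩
        have hs : succ σ ≤ αs := le_trans (Finset.le_sup hmemF) le_sup_right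
        exact absurd ((lt_succ σ).trans_le (hs.trans h1)) (lt_irrefl σ)
      have hfreeV : ∀ σ, αs ≤ σ → σ < β → σ ∉ S.rank A V := by
        intro σ h1 h2 hmem
        have hmemF : σ ∈ F := Finset.mem_filter.2
          ⟨(Set.Finite.mem_toFinset _).2 (Or.inr hmem), h2⟩
        have hs : succ σ ≤ αs := le_trans (Finset.le_sup hmemF) le_sup_right
        exact absurd ((lt_succ σ).trans_le (hs.trans h1)) (lt_irrefl σ)
      obtain ⟨w, hwU, hwV⟩ := IH αs hαsβ hαsτ hγαs
      obtain ⟨z, hz⟩ := S.p_surj αs β hαsβ.le hβ w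
      refine ⟨z, ?_, ?_⟩
      · refine master hac hA U αs β hβ hαsβ.le hfreeU ?_
        rw [Set.mem_preimage, hz]
        exact hwU
      · refine master hac hA V αs β hβ hαsβ.le hfreeV ?_
        rw [Set.mem_preimage, hz]
        exact hwV
end InvSystem

open Order InvSystem in
/-- For an almost continuous inverse system with skeletal bonding maps and `A = a-lim S`:
if `U, V ⊆ A` are open with finite ranks and disjoint closures, and
`q(U) ∩ q(V) ∩ [γ, τ) = ∅` for some `γ < τ`, then
`Int cl p_γ(U)` and `Int cl p_γ(V)` are disjoint. -/
theorem interior_closure_proj_disjoint {τ : Ordinal.{u}} (S : InvSystem τ)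
    (A : Set (∀ α : {o : Ordinal.{u} // o < τ}, S.X α.1))
    (hac : S.AlmostContinuous)
    (hskel : ∀ (α β : Ordinal.{u}) (h : α ≤ β), β < τ → IsSkeletalMap (S.p α β h))
    (hA : S.IsALim A)
    (U V : Set ↥A) (hU : IsOpen U) (hV : IsOpen V)
    (hqU : (S.rank A U).Finite) (hqV : (S.rank A V).Finite)
    (hdisj : closure U ∩ closure V = ∅)
    (γ : Ordinal.{u}) (hγ : γ < τ)
    (hrank : ∀ β : Ordinal.{u}, γ ≤ β → ¬(β ∈ S.rank A U ∧ β ∈ S.rank A V)) :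
    interior (closure (S.proj A γ hγ '' U)) ∩
      interior (closure (S.proj A γ hγ '' V)) = ∅ := by
  by_contra hne
  have hW : (interior (closure (S.proj A γ hγ '' U)) ∩
      interior (closure (S.proj A γ hγ '' V))).Nonempty :=
    Set.nonempty_iff_ne_empty.2 hne
  set Fb := (hqU.union hqV).toFinset with hFb
  set β₀ : Ordinal.{u} := γ ⊔ Fb.sup succ with hβ₀def
  have hβ₀τ : β₀ < τ := by
    refine sup_lt_iff.2 ⟨hγ, ?_⟩
    refine Finset.sup_lt_iff (lt_of_le_of_lt bot_le hγ) |>.2 (fun σ hσ => ?_)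
    rcases (Set.Finite.mem_toFinset _).1 hσ with h | h
    · obtain ⟨h1, -⟩ := h; exact h1
    · obtain ⟨h1, -⟩ := h; exact h1
  have hfreeU : ∀ σ, β₀ ≤ σ → σ ∉ S.rank A U := by
    intro σ h1 hmem
    have hs : succ σ ≤ β₀ := le_trans
      (Finset.le_sup ((Set.Finite.mem_toFinset _).2 (Or.inl hmem))) le_sup_right
    exact absurd ((lt_succ σ).trans_le (hs.trans h1)) (lt_irrefl σ)
  have hfreeV : ∀ σ, β₀ ≤ σ → σ ∉ S.rank A V := by
    intro σ h1 hmem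
    have hs : succ σ ≤ β₀ := le_trans
      (Finset.le_sup ((Set.Finite.mem_toFinset _).2 (Or.inr hmem))) le_sup_right
    exact absurd ((lt_succ σ).trans_le (hs.trans h1)) (lt_irrefl σ)
  obtain ⟨w, hwU, hwV⟩ :=
    climb hac hskel hA hU hV hqU hqV hγ hrank hW β₀ hβ₀τ le_sup_left
  obtain ⟨x, hx⟩ := hA.2 β₀ hβ₀τ w
  have key : ∀ (T : Set ↥A),
      w ∈ interior (closure (S.proj A β₀ hβ₀τ '' T)) →
      (∀ σ, β₀ ≤ σ → σ ∉ S.rank A T) → x ∈ closure T := by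
    intro T hwT hfreeT
    rw [mem_closure_iff]
    intro O hO hxO
    obtain ⟨δ, hδ, hleδ, O', hO', hmemO', hback⟩ := exists_basic_nbhd hA hO hxO hβ₀τ
    have hcomp : S.p β₀ δ hleδ (S.proj A δ hδ x) = w := by
      rw [proj_comp (S := S) hA.1 hleδ hδ x]
      exact hx
    set O'' := O' ∩ (S.p β₀ δ hleδ) ⁻¹'
      (interior (closure (S.proj A β₀ hβ₀τ '' T))) with hO''def
    have hxO'' : S.proj A δ hδ x ∈ O'' := by
      refine ⟨hmemO', ?_⟩
      rw [Set.mem_preimage, hcomp]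
      exact hwT
    have hO''open : IsOpen O'' :=
      hO'.inter (isOpen_interior.preimage (S.p_cont _ _ _))
    have hO''sub : O'' ⊆ interior (closure (S.proj A δ hδ '' T)) := by
      intro z hz
      exact master hac hA T β₀ δ hδ hleδ (fun σ h1 _ => hfreeT σ h1) hz.2
    have hclos : S.proj A δ hδ x ∈ closure (S.proj A δ hδ '' T) :=
      interior_subset (hO''sub hxO'')
    obtain ⟨w', hw'O'', hw'T⟩ := (mem_closure_iff.1 hclos) O'' hO''open hxO''
    obtain ⟨uu, huu, rfl⟩ := hw'T
    exact ⟨uu, hback uu hw'O''.1, huu⟩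
  have hmem : x ∈ closure U ∩ closure V := ⟨key U hwU hfreeU, key V hwV hfreeV⟩
  rw [hdisj] at hmem
  exact hmem
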